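/- Let f : [0,1] → ℝ be continuous and b(x) = (f(1) − f(0))x + f(0). For each k ∈ ℕ, let 0 = x_{0,k} < x_{1,k} < ⋯ < x_{n_k,k} = 1 be a partition of [0,1], let l_{i,k} : [0,1] → [0,1] (i = 1,…,n_k) be continuous injective maps with l_{i,k}(0) = x_{i−1,k}, l_{i,k}(1) = x_{i,k}, l_{i,k}([0,1]) = [x_{i−1,k}, x_{i,k}], and let S_{i,k} : [0,1] → ℝ be continuous with sup_{k} max_{i} sup_{t∈[0,1]} |S_{i,k}(t)| ≤ s for some s ∈ [0,1). Let T_k be the operator on C_*[0,1] := {g ∈ C[0,1] : g(0) = f(0), g(1) = f(1)} determined by T_k g (l_{i,k}(t)) = f(l_{i,k}(t)) + S_{i,k}(t)·(g(t) − b(t)) for t ∈ [0,1], i = 1,…,n_k. Set r := (‖f‖_∞ + s‖b‖_∞)/(1−s). Then there exists f* ∈ C_*[0,1] with ‖f*‖_∞ ≤ r such that for every f_0 ∈ C_*[0,1] with ‖f_0‖_∞ ≤ r, the backward trajectories Ψ_k(f_0) := T_1 ∘ T_2 ∘ ⋯ ∘ T_k (f_0) converge uniformly on [0,1] to f*; in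 particular the limit is independent of f_0 (e.g. one may take f_0 = f or f_0 = b). The limit f* is a continuous non-stationary fractal interpolation function. -/

import Mathlib

open Filter Topology unitInterval

/-- Backward trajectory of a sequence of operators:
`backwardTraj T k = T 0 ∘ T 1 ∘ ⋯ ∘ T (k-1)`. -/
def backwardTraj {α : Type*} (T : ℕ → α → α) : ℕ → α → α
  | 0 => id
  | k + 1 => fun a => backwardTraj T k (T k a)

theorem nonstationary_fractal_interpolation
    (f : unitInterval → ℝ) (hf : Continuous f)
    (b : unitInterval → ℝ) (hb : ∀ t, b t = (f 1 - f 0) * (t : ℝ) + f 0)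
    (n : ℕ → ℕ) (hn : ∀ k, 0 < n k)
    (x : (k : ℕ) → Fin (n k + 1) → unitInterval)
    (hx0 : ∀ k, x k 0 = 0) (hxn : ∀ k, x k (Fin.last (n k)) = 1)
    (hxmono : ∀ k, StrictMono (x k))
    (l : (k : ℕ) → Fin (n k) → unitInterval → unitInterval)
    (hlc : ∀ k i, Continuous (l k i)) (hli : ∀ k i, Function.Injective (l k i))
    (hl0 : ∀ k i, l k i 0 = x k i.castSucc) (hl1 : ∀ k i, l k i 1 = x k i.succ)
    (hlr : ∀ k i, Set.range (l k i) = Set.Icc (x k i.castSucc) (x k i.succ))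
    (S : (k : ℕ) → Fin (n k) → unitInterval → ℝ) (hS : ∀ k i, Continuous (S k i))
    (s : ℝ) (hs0 : 0 ≤ s) (hs1 : s < 1) (hSb : ∀ k i t, |S k i t| ≤ s)
    (T : ℕ → (unitInterval → ℝ) → (unitInterval → ℝ))
    (hT : ∀ k (g : unitInterval → ℝ) i t,
      T k g (l k i t) = f (l k i t) + S k i t * (g t - b t)) :
    ∃ fs : unitInterval → ℝ, Continuous fs ∧ fs 0 = f 0 ∧ fs 1 = f 1 ∧
      (∀ t, |fs t| ≤ ((⨆ t, |f t|) + s * ⨆ t, |b t|) / (1 - s)) ∧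
      ∀ f₀ : unitInterval → ℝ, Continuous f₀ → f₀ 0 = f 0 → f₀ 1 = f 1 →
        (∀ t, |f₀ t| ≤ ((⨆ t, |f t|) + s * ⨆ t, |b t|) / (1 - s)) →
        TendstoUniformly (fun k => backwardTraj T k f₀) fs atTop := by
  classical
  -- basic facts about b
  have hbc : Continuous b := by
    have : b = fun t : unitInterval => (f 1 - f 0) * (t : ℝ) + f 0 := funext hb
    rw [this]; fun_prop
  have hb0 : b 0 = f 0 := by simp [hb]
  have hb1 : b 1 = f 1 := by rw [hb]; simp
  set Mf := ⨆ t, |f t| with hMfdef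
  set Mb := ⨆ t, |b t| with hMbdef
  set r := (Mf + s * Mb) / (1 - s) with hrdef
  have hbddf : BddAbove (Set.range fun t : unitInterval => |f t|) :=
    (isCompact_range hf.abs).bddAbove
  have hbddb : BddAbove (Set.range fun t : unitInterval => |b t|) :=
    (isCompact_range hbc.abs).bddAbove
  have hMf_le : ∀ t, |f t| ≤ Mf := fun t => le_ciSup hbddf t
  have hMb_le : ∀ t, |b t| ≤ Mb := fun t => le_ciSup hbddb t
  have hMf0 : 0 ≤ Mf := (abs_nonneg _).trans (hMf_le 0)
  have hMb_le_Mf : ∀ t : unitInterval, |b t| ≤ Mf := by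
    intro t
    have h0 : (0:ℝ) ≤ t := t.2.1
    have h1 : (t:ℝ) ≤ 1 := t.2.2
    have e : b t = (t:ℝ) * f 1 + (1 - (t:ℝ)) * f 0 := by rw [hb]; ring
    rw [e]
    calc |(t:ℝ) * f 1 + (1-(t:ℝ)) * f 0| ≤ |(t:ℝ) * f 1| + |(1-(t:ℝ))*f 0| := abs_add_le _ _
      _ = (t:ℝ) * |f 1| + (1-(t:ℝ))*|f 0| := by
          rw [abs_mul, abs_mul, abs_of_nonneg h0, abs_of_nonneg (show (0:ℝ) ≤ 1 - (t:ℝ) by linarith)]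
      _ ≤ (t:ℝ) * Mf + (1-(t:ℝ))*Mf := by
          have h2 : (0:ℝ) ≤ 1 - (t:ℝ) := by linarith
          gcongr
          exacts [hMf_le 1, hMf_le 0]
      _ = Mf := by ring
  have hMb0 : 0 ≤ Mb := (abs_nonneg _).trans (hMb_le 0)
  have h1s : 0 < 1 - s := by linarith
  have hr_eq : Mf + s * Mb + s * r = r := by
    rw [hrdef]; field_simp; ring
  have hr0 : 0 ≤ r := div_nonneg (by nlinarith) h1s.le
  have hMf_r : Mf ≤ r := by nlinarith [mul_nonneg hs0 hMb0, mul_nonneg hs0 hr0]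
  have hbr : ∀ t, |b t| ≤ r := fun t => (hMb_le_Mf t).trans hMf_r
  -- membership of l k i t in the subinterval
  have hmem : ∀ k i t, l k i t ∈ Set.Icc (x k i.castSucc) (x k i.succ) := by
    intro k i t; rw [← hlr k i]; exact Set.mem_range_self t
  -- every point of [0,1] is in the range of some l k i
  have hsurj : ∀ k (u : unitInterval), ∃ i t, l k i t = u := by
    intro k u
    suffices h : ∃ i : Fin (n k), u ∈ Set.Icc (x k i.castSucc) (x k i.succ) by
      obtain ⟨i, hi⟩ := h
      rw [← hlr k i] at hi
      obtain ⟨t, ht⟩ := hi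
      exact ⟨i, t, ht⟩
    set Fs := Finset.univ.filter (fun j : Fin (n k + 1) => x k j ≤ u) with hFs
    have h0mem : (0 : Fin (n k + 1)) ∈ Fs := by
      simp only [hFs, Finset.mem_filter, Finset.mem_univ, true_and]
      rw [hx0 k]; exact unitInterval.nonneg'
    have hne : Fs.Nonempty := ⟨0, h0mem⟩
    set j := Fs.max' hne with hj
    have hjmem : j ∈ Fs := Fs.max'_mem hne
    have hju : x k j ≤ u := by
      simpa only [hFs, Finset.mem_filter, Finset.mem_univ, true_and] using hjmem
    by_cases hjl : (j : ℕ) < n k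
    · refine ⟨⟨(j:ℕ), hjl⟩, ?_, ?_⟩
      · have hcs : (⟨(j:ℕ), hjl⟩ : Fin (n k)).castSucc = j := by
          ext; simp
        rw [hcs]; exact hju
      · by_contra hlt
        push_neg at hlt
        have hmem' : ((⟨(j:ℕ), hjl⟩ : Fin (n k)).succ : Fin (n k + 1)) ∈ Fs := by
          simp only [hFs, Finset.mem_filter, Finset.mem_univ, true_and]
          exact hlt.le
        have hle := Fs.le_max' _ hmem'
        rw [← hj] at hle
        have : (j:ℕ) + 1 ≤ (j:ℕ) := by
          simpa [Fin.le_def] using hle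
        omega
    · have hjlast : j = Fin.last (n k) := by
        ext
        have := j.isLt
        simp only [Fin.val_last]
        omega
      have hu1 : u = 1 := le_antisymm unitInterval.le_one' (by
        rw [hjlast, hxn k] at hju; exact hju)
      have hpos := hn k
      refine ⟨⟨n k - 1, by omega⟩, ?_, ?_⟩
      · exact unitInterval.le_one'.trans hu1.ge
      · have hsuc : ((⟨n k - 1, by omega⟩ : Fin (n k)).succ : Fin (n k + 1)) = Fin.last (n k) := by
          ext; simp; omega
        rw [hsuc, hxn k, hu1]
  -- continuity of T k g
  have hTcont : ∀ k (g : unitInterval → ℝ), Continuous g → Continuous (T k g) := by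
    intro k g hg
    have hcov : ⋃ i : Fin (n k), Set.Icc (x k i.castSucc) (x k i.succ) = Set.univ := by
      apply Set.eq_univ_of_forall
      intro u
      obtain ⟨i, t, ht⟩ := hsurj k u
      exact Set.mem_iUnion.mpr ⟨i, ht ▸ hmem k i t⟩
    apply LocallyFinite.continuous (f := fun i : Fin (n k) => Set.Icc (x k i.castSucc) (x k i.succ))
      (locallyFinite_of_finite _) hcov (fun i => isClosed_Icc)
    intro i
    set A := Set.Icc (x k i.castSucc) (x k i.succ) with hA
    have hcod : ∀ t, l k i t ∈ A := hmem k i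
    set L : unitInterval → A := fun t => ⟨l k i t, hcod t⟩ with hL
    have hLbij : Function.Bijective L := by
      constructor
      · intro a c hac
        exact hli k i (congrArg Subtype.val hac)
      · rintro ⟨y, hy⟩
        rw [hA, ← hlr k i] at hy
        obtain ⟨t, ht⟩ := hy
        exact ⟨t, Subtype.ext ht⟩
    have hLc : Continuous L := Continuous.subtype_mk (hlc k i) _
    let e : unitInterval ≃ₜ A :=
      Continuous.homeoOfEquivCompactToT2 (f := Equiv.ofBijective L hLbij) hLc
    rw [continuousOn_iff_continuous_restrict]
    have hres : A.restrict (T k g) =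
        (fun t => f (l k i t) + S k i t * (g t - b t)) ∘ e.symm := by
      funext y
      have hy : l k i (e.symm y) = (y : unitInterval) := by
        have := e.apply_symm_apply y
        exact congrArg Subtype.val this
      simp only [Set.restrict_apply, Function.comp_apply]
      show T k g (y : unitInterval) = _
      rw [← hy, hT]
    show Continuous (A.restrict (T k g))
    rw [hres]
    exact ((hf.comp (hlc k i)).add ((hS k i).mul (hg.sub hbc))).comp e.continuous_symm
  -- contraction estimate
  have hTcontract : ∀ k (g h : unitInterval → ℝ) (c : ℝ), (∀ t, |g t - h t| ≤ c) →
      ∀ u, |T k g u - T k h u| ≤ s * c := by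
    intro k g h c hgh u
    obtain ⟨i, t, ht⟩ := hsurj k u
    rw [← ht, hT, hT]
    have he : f (l k i t) + S k i t * (g t - b t) - (f (l k i t) + S k i t * (h t - b t))
        = S k i t * (g t - h t) := by ring
    rw [he, abs_mul]
    exact mul_le_mul (hSb k i t) (hgh t) (abs_nonneg _) hs0
  -- boundedness preservation
  have hTbound : ∀ k (g : unitInterval → ℝ), (∀ t, |g t| ≤ r) → ∀ u, |T k g u| ≤ r := by
    intro k g hg u
    obtain ⟨i, t, ht⟩ := hsurj k u
    rw [← ht, hT]
    have h1 : |S k i t * (g t - b t)| ≤ s * (r + Mb) := by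
      rw [abs_mul]
      refine mul_le_mul (hSb k i t) ?_ (abs_nonneg _) hs0
      calc |g t - b t| ≤ |g t| + |b t| := abs_sub _ _
        _ ≤ r + Mb := add_le_add (hg t) (hMb_le t)
    calc |f (l k i t) + S k i t * (g t - b t)| ≤ |f (l k i t)| + |S k i t * (g t - b t)| :=
          abs_add_le _ _
      _ ≤ Mf + s * (r + Mb) := add_le_add (hMf_le _) h1
      _ = Mf + s * Mb + s * r := by ring
      _ = r := hr_eq
  -- endpoint preservation
  have hTend : ∀ k (g : unitInterval → ℝ), g 0 = f 0 → g 1 = f 1 →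
      T k g 0 = f 0 ∧ T k g 1 = f 1 := by
    intro k g hg0 hg1
    constructor
    · have hl : l k ⟨0, hn k⟩ 0 = 0 := by
        rw [hl0]
        have : ((⟨0, hn k⟩ : Fin (n k)).castSucc : Fin (n k + 1)) = 0 := by ext; simp
        rw [this, hx0]
      calc T k g 0 = T k g (l k ⟨0, hn k⟩ 0) := by rw [hl]
        _ = f (l k ⟨0, hn k⟩ 0) + S k ⟨0, hn k⟩ 0 * (g 0 - b 0) := hT k g _ 0
        _ = f 0 := by rw [hl, hg0, hb0]; ring
    · have hpos := hn k
      have hl : l k ⟨n k - 1, by omega⟩ 1 = 1 := by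
        rw [hl1]
        have : ((⟨n k - 1, by omega⟩ : Fin (n k)).succ : Fin (n k + 1)) = Fin.last (n k) := by
          ext; simp; omega
        rw [this, hxn]
      calc T k g 1 = T k g (l k ⟨n k - 1, by omega⟩ 1) := by rw [hl]
        _ = f (l k ⟨n k - 1, by omega⟩ 1) + S k ⟨n k - 1, by omega⟩ 1 * (g 1 - b 1) := hT k g _ 1
        _ = f 1 := by rw [hl, hg1, hb1]; ring
  -- backward trajectory preserves the class
  have hBT : ∀ (k : ℕ) (g : unitInterval → ℝ), Continuous g → g 0 = f 0 → g 1 = f 1 →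
      (∀ t, |g t| ≤ r) →
      Continuous (backwardTraj T k g) ∧ backwardTraj T k g 0 = f 0 ∧
        backwardTraj T k g 1 = f 1 ∧ ∀ t, |backwardTraj T k g t| ≤ r := by
    intro k
    induction k with
    | zero => intro g hc h0 h1 hbd; exact ⟨hc, h0, h1, hbd⟩
    | succ k ih =>
      intro g hc h0 h1 hbd
      have hend := hTend k g h0 h1
      exact ih (T k g) (hTcont k g hc) hend.1 hend.2 (hTbound k g hbd)
  -- contraction estimate for trajectories
  have hBTc : ∀ (k : ℕ) (g h : unitInterval → ℝ) (c : ℝ), (∀ t, |g t - h t| ≤ c) →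
      ∀ u, |backwardTraj T k g u - backwardTraj T k h u| ≤ s^k * c := by
    intro k
    induction k with
    | zero => intro g h c hgh u; simpa [backwardTraj] using hgh u
    | succ k ih =>
      intro g h c hgh u
      have h1 : ∀ t, |T k g t - T k h t| ≤ s * c := hTcontract k g h c hgh
      calc |backwardTraj T (k+1) g u - backwardTraj T (k+1) h u|
          = |backwardTraj T k (T k g) u - backwardTraj T k (T k h) u| := rfl
        _ ≤ s^k * (s * c) := ih (T k g) (T k h) (s * c) h1 u
        _ = s^(k+1) * c := by ring
  -- the Cauchy sequence of trajectories of b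
  have hgoodb : ∀ k, Continuous (backwardTraj T k b) ∧ backwardTraj T k b 0 = f 0 ∧
      backwardTraj T k b 1 = f 1 ∧ ∀ t, |backwardTraj T k b t| ≤ r :=
    fun k => hBT k b hbc hb0 hb1 hbr
  set F : ℕ → C(unitInterval, ℝ) := fun k => ⟨backwardTraj T k b, (hgoodb k).1⟩ with hFdef
  have hFd : ∀ k, dist (F k) (F (k+1)) ≤ (2*r) * s^k := by
    intro k
    rw [ContinuousMap.dist_le (by positivity)]
    intro t
    have hdiff : ∀ u, |T k b u - b u| ≤ 2*r := by
      intro u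
      have h1 := hTbound k b hbr u
      have h2 := hbr u
      calc |T k b u - b u| ≤ |T k b u| + |b u| := abs_sub _ _
        _ ≤ 2*r := by linarith
    have hkey := hBTc k (T k b) b (2*r) hdiff t
    rw [Real.dist_eq]
    calc |F k t - F (k+1) t|
        = |backwardTraj T k (T k b) t - backwardTraj T k b t| := by
          rw [abs_sub_comm]; rfl
      _ ≤ s^k * (2*r) := hkey
      _ = 2*r*s^k := by ring
  have hcauchy : CauchySeq F := cauchySeq_of_le_geometric s (2*r) hs1 hFd
  obtain ⟨fsC, hfsC⟩ := cauchySeq_tendsto_of_complete hcauchy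
  have huC : TendstoUniformly (fun k t => F k t) (fun t => fsC t) atTop :=
    ContinuousMap.tendsto_iff_tendstoUniformly.mp hfsC
  refine ⟨fun t => fsC t, fsC.continuous, ?_, ?_, ?_, ?_⟩
  · have h0 : Tendsto (fun k => (F k) (0:unitInterval)) atTop (𝓝 (fsC 0)) := huC.tendsto_at 0
    have he : (fun k => (F k) (0:unitInterval)) = fun _ => f 0 :=
      funext fun k => (hgoodb k).2.1
    rw [he] at h0
    exact tendsto_nhds_unique h0 tendsto_const_nhds
  · have h0 : Tendsto (fun k => (F k) (1:unitInterval)) atTop (𝓝 (fsC 1)) := huC.tendsto_at 1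
    have he : (fun k => (F k) (1:unitInterval)) = fun _ => f 1 :=
      funext fun k => (hgoodb k).2.2.1
    rw [he] at h0
    exact tendsto_nhds_unique h0 tendsto_const_nhds
  · intro t
    have h0 : Tendsto (fun k => |(F k) t|) atTop (𝓝 (|fsC t|)) := (huC.tendsto_at t).abs
    exact le_of_tendsto h0 (Filter.Eventually.of_forall fun k => (hgoodb k).2.2.2 t)
  · intro f₀ hc h0 h1 hbd
    rw [Metric.tendstoUniformly_iff]
    intro ε hε
    have hb2 : ∀ᶠ k in atTop, ∀ t, dist (fsC t) (F k t) < ε/2 :=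
      (Metric.tendstoUniformly_iff.mp huC) (ε/2) (by linarith)
    have htend0 : Tendsto (fun k : ℕ => s^k * (2*r)) atTop (𝓝 0) := by
      simpa using (tendsto_pow_atTop_nhds_zero_of_lt_one hs0 hs1).mul_const (2*r)
    have hs2 : ∀ᶠ k in atTop, s^k * (2*r) < ε/2 :=
      htend0.eventually (eventually_lt_nhds (by linarith))
    filter_upwards [hb2, hs2] with k hk1 hk2
    intro t
    have hdd : |backwardTraj T k b t - backwardTraj T k f₀ t| ≤ s^k * (2*r) := by
      refine hBTc k b f₀ (2*r) (fun u => ?_) t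
      calc |b u - f₀ u| ≤ |b u| + |f₀ u| := abs_sub _ _
        _ ≤ 2*r := by linarith [hbr u, hbd u]
    have hkt := hk1 t
    rw [Real.dist_eq] at hkt ⊢
    have hFk : (F k) t = backwardTraj T k b t := rfl
    rw [hFk] at hkt
    calc |fsC t - backwardTraj T k f₀ t|
        ≤ |fsC t - backwardTraj T k b t| + |backwardTraj T k b t - backwardTraj T k f₀ t| :=
          abs_sub_le _ _ _
      _ < ε/2 + ε/2 := add_lt_add_of_lt_of_le hkt (le_of_lt (lt_of_le_of_lt hdd hk2))
      _ = ε := by ring
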